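/- Let A ∈ ℝ^{m×n_A} and let B ∈ ℝ^{m×n_B} have unit-norm columns. Let S be a set of columns of B with |S| ≤ k, σ_min(S) > 0, and let T be a set of columns of B with f_A(S) ≥ f_A(T) and f_A(S) > 0. Let 0 < δ < 1 and let s be a natural number with n_B·log(1/δ)/k ≤ s ≤ n_B − |T|. If R is a subset of (columns of B) \ T of size s chosen uniformly at random, then E[ max_{v∈R} ( f_A(T ∪ {v}) − f_A(T) ) ] ≥ (1 − δ)·σ_min(S)·(f_A(S) − f_A(T))² / (4·k·f_A(S)). -/

import Mathlib

open scoped RealInnerProductSpace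

attribute [local instance] Classical.decEq

noncomputable def fVec {m : ℕ} (u : EuclideanSpace ℝ (Fin m))
    (S : Finset (EuclideanSpace ℝ (Fin m))) : ℝ :=
  ‖(Submodule.orthogonalProjectionOnto (Submodule.span ℝ (S : Set (EuclideanSpace ℝ (Fin m)))) u :
      EuclideanSpace ℝ (Fin m))‖ ^ 2

noncomputable def fMat {m n : ℕ} (A : Fin n → EuclideanSpace ℝ (Fin m))
    (S : Finset (EuclideanSpace ℝ (Fin m))) : ℝ :=
  ∑ j, fVec (A j) S

noncomputable def sigmaMin {m : ℕ} (S : Finset (EuclideanSpace ℝ (Fin m))) : ℝ :=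
  sInf {r : ℝ | ∃ α : S → ℝ, ∑ v, (α v) ^ 2 = 1 ∧
    r = ‖∑ v, α v • (v : EuclideanSpace ℝ (Fin m))‖ ^ 2}

noncomputable def sigmaMax {m : ℕ} (S : Finset (EuclideanSpace ℝ (Fin m))) : ℝ :=
  sSup {r : ℝ | ∃ α : S → ℝ, ∑ v, (α v) ^ 2 = 1 ∧
    r = ‖∑ v, α v • (v : EuclideanSpace ℝ (Fin m))‖ ^ 2}

def IsGreedySeq {m nA nB : ℕ} (A : Fin nA → EuclideanSpace ℝ (Fin m))
    (B : Fin nB → EuclideanSpace ℝ (Fin m))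
    (T : ℕ → Finset (EuclideanSpace ℝ (Fin m))) (b : ℕ → Fin nB) : Prop :=
  T 0 = ∅ ∧ ∀ i, T (i + 1) = insert (B (b i)) (T i) ∧
    ∀ j, fMat A (insert (B j) (T i)) ≤ fMat A (insert (B (b i)) (T i))

variable {m : ℕ}

local notation "E" => EuclideanSpace ℝ (Fin m)

lemma norm_proj_le (K : Submodule ℝ E) (u : E) :
    ‖(Submodule.orthogonalProjectionOnto K u : E)‖ ≤ ‖u‖ := by
  simpa using (Submodule.orthogonalProjectionOnto K).le_of_opNorm_le (Submodule.orthogonalProjectionOnto_norm_le K) u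

lemma norm_proj_mono {K K' : Submodule ℝ E} (h : K ≤ K') (u : E) :
    ‖(Submodule.orthogonalProjectionOnto K u : E)‖ ≤ ‖(Submodule.orthogonalProjectionOnto K' u : E)‖ := by
  rw [← Submodule.orthogonalProjectionOnto_starProjection_of_le h u]
  exact norm_proj_le K _

lemma fVec_nonneg (u : E) (V : Finset E) : 0 ≤ fVec u V := sq_nonneg _

lemma fVec_mono {V W : Finset E} (h : Submodule.span ℝ (V : Set E) ≤ Submodule.span ℝ (W : Set E))
    (u : E) : fVec u V ≤ fVec u W := by
  have := norm_proj_mono h u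
  exact pow_le_pow_left₀ (norm_nonneg _) this 2

lemma proj_congr {K K' : Submodule ℝ E} (h : K = K') (u : E) :
    (Submodule.orthogonalProjectionOnto K u : E) = Submodule.orthogonalProjectionOnto K' u := by subst h; rfl

lemma inner_residual_zero {K : Submodule ℝ E} (u : E) {x : E} (hx : x ∈ K) :
    ⟪u - (Submodule.orthogonalProjectionOnto K u : E), x⟫ = 0 := by
  have h := Submodule.sub_starProjection_mem_orthogonal (K := K) u
  exact (Submodule.mem_orthogonal' K _).1 h x hx

lemma fVec_insert_sub (u w : E) (hw : ‖w‖ ≤ 1) (V : Finset E) :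
    ⟪u - (Submodule.orthogonalProjectionOnto (Submodule.span ℝ (V : Set E)) u : E), w⟫ ^ 2 ≤
      fVec u (insert w V) - fVec u V := by
  classical
  set K := Submodule.span ℝ (V : Set E) with hK
  set p : E := (Submodule.orthogonalProjectionOnto K u : E) with hp
  by_cases hwK : w ∈ K
  · have hspan : Submodule.span ℝ ((insert w V : Finset E) : Set E) = K := by
      rw [Finset.coe_insert, Submodule.span_insert_eq_span hwK]
    have h1 : fVec u (insert w V) = fVec u V := by
      unfold fVec; rw [proj_congr hspan]
    have h2 : ⟪u - p, w⟫ = 0 := inner_residual_zero u hwK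
    rw [h1, h2]; simp
  · set w' : E := w - (Submodule.orthogonalProjectionOnto K w : E) with hw'
    have hw'K : w' ∈ Kᗮ := Submodule.sub_starProjection_mem_orthogonal w
    have hw'0 : w' ≠ 0 := by
      intro h
      exact hwK (by rw [show w = (Submodule.orthogonalProjectionOnto K w : E) by
        rwa [← sub_eq_zero]]; exact (Submodule.orthogonalProjectionOnto K w).2)
    set c : ℝ := ‖w'‖ with hc
    have hc0 : 0 < c := norm_pos_iff.2 hw'0
    set e : E := c⁻¹ • w' with he
    have hce : c • e = w' := by
      rw [he, smul_smul, mul_inv_cancel₀ (ne_of_gt hc0), one_smul]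
    have hene : ‖e‖ = 1 := by
      rw [he, norm_smul, norm_inv, Real.norm_eq_abs, abs_of_pos hc0, inv_mul_cancel₀ (ne_of_gt hc0)]
    have heK : e ∈ Kᗮ := Submodule.smul_mem _ _ hw'K
    have hwdec : w = (Submodule.orthogonalProjectionOnto K w : E) + c • e := by
      rw [hce, hw']; abel
    have hee : ⟪e, e⟫ = (1 : ℝ) := by
      rw [real_inner_self_eq_norm_sq, hene]; norm_num
    have hpe0 : ⟪p, e⟫ = 0 := by
      rw [real_inner_comm]
      exact (Submodule.mem_orthogonal' K e).1 heK p (Submodule.orthogonalProjectionOnto K u).2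
    have hspan : Submodule.span ℝ ((insert w V : Finset E) : Set E) = K ⊔ ℝ ∙ e := by
      rw [Finset.coe_insert, Submodule.span_insert]
      apply le_antisymm
      · apply sup_le
        · rw [Submodule.span_singleton_le_iff_mem, hwdec]
          exact Submodule.add_mem _ (Submodule.mem_sup_left (Submodule.orthogonalProjectionOnto K w).2)
            (Submodule.mem_sup_right (Submodule.smul_mem _ c (Submodule.mem_span_singleton_self e)))
        · exact le_sup_left
      · apply sup_le le_sup_right
        rw [Submodule.span_singleton_le_iff_mem, he, hw']
        exact Submodule.smul_mem _ _ (Submodule.sub_mem _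
          (Submodule.mem_sup_left (Submodule.mem_span_singleton_self w))
          (Submodule.mem_sup_right (Submodule.orthogonalProjectionOnto K w).2))
    have hprojsup : (Submodule.orthogonalProjectionOnto (K ⊔ ℝ ∙ e) u : E) = p + ⟪u, e⟫ • e := by
      apply Submodule.eq_starProjection_of_mem_of_inner_eq_zero
      · exact Submodule.add_mem _ (Submodule.mem_sup_left (Submodule.orthogonalProjectionOnto K u).2)
          (Submodule.mem_sup_right (Submodule.smul_mem _ _ (Submodule.mem_span_singleton_self e)))
      · intro x hx
        rcases Submodule.mem_sup.1 hx with ⟨y, hy, z, hz, rfl⟩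
        rcases Submodule.mem_span_singleton.1 hz with ⟨t, rfl⟩
        have hey : ⟪e, y⟫ = 0 := (Submodule.mem_orthogonal' K e).1 heK y hy
        have huy : ⟪u - p, y⟫ = 0 := inner_residual_zero u hy
        have hsub : u - (p + ⟪u, e⟫ • e) = (u - p) - ⟪u, e⟫ • e := by module
        have h1 : ⟪(u - p) - ⟪u, e⟫ • e, y⟫ = 0 := by
          rw [inner_sub_left, huy, real_inner_smul_left, hey]
          ring
        have h2 : ⟪(u - p) - ⟪u, e⟫ • e, e⟫ = 0 := by
          rw [inner_sub_left, inner_sub_left, real_inner_smul_left, hee, hpe0]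
          ring
        rw [hsub, inner_add_right, h1, real_inner_smul_right, h2]
        ring
    have hpse : ⟪p, ⟪u, e⟫ • e⟫ = 0 := by
      rw [real_inner_smul_right, hpe0]; ring
    have hnorm : ‖p + ⟪u, e⟫ • e‖ ^ 2 = ‖p‖ ^ 2 + ⟪u, e⟫ ^ 2 := by
      rw [norm_add_sq_real, hpse, norm_smul, Real.norm_eq_abs, hene, mul_one, sq_abs]
      ring
    have hfins : fVec u (insert w V) = fVec u V + ⟪u, e⟫ ^ 2 := by
      calc fVec u (insert w V) = ‖p + ⟪u, e⟫ • e‖ ^ 2 := by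
            unfold fVec; rw [proj_congr hspan, hprojsup]
        _ = ‖p‖ ^ 2 + ⟪u, e⟫ ^ 2 := hnorm
        _ = fVec u V + ⟪u, e⟫ ^ 2 := rfl
    have hue : ⟪u, e⟫ = ⟪u - p, e⟫ := by
      rw [inner_sub_left, hpe0]; ring
    have huw : ⟪u - p, w⟫ = c * ⟪u, e⟫ := by
      rw [hue]
      nth_rewrite 1 [hwdec]
      rw [inner_add_right, inner_residual_zero u (Submodule.orthogonalProjectionOnto K w).2,
        real_inner_smul_right]
      ring
    have hc1 : c ≤ 1 := by
      have hz : ⟪w', (Submodule.orthogonalProjectionOnto K w : E)⟫ = 0 :=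
        (Submodule.mem_orthogonal' K w').1 hw'K _ (Submodule.orthogonalProjectionOnto K w).2
      have h1 : c ^ 2 = ⟪w', w⟫ := by
        have hww : ⟪w', w⟫ = ⟪w', w'⟫ := by
          nth_rewrite 1 [hwdec]
          rw [inner_add_right, hz, hce, zero_add]
        rw [hww, real_inner_self_eq_norm_sq]
      have h2 : ⟪w', w⟫ ≤ c * 1 := by
        calc ⟪w', w⟫ ≤ ‖w'‖ * ‖w‖ := real_inner_le_norm _ _
          _ ≤ c * 1 := by apply mul_le_mul_of_nonneg_left hw (le_of_lt hc0)
      nlinarith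
    rw [hfins, huw]
    have hcsq : c ^ 2 ≤ 1 := by nlinarith
    have h2 : ⟪u, e⟫ ^ 2 * c ^ 2 ≤ ⟪u, e⟫ ^ 2 :=
      mul_le_of_le_one_right (sq_nonneg _) hcsq
    have h3 : (c * ⟪u, e⟫) ^ 2 ≤ ⟪u, e⟫ ^ 2 := by
      calc (c * ⟪u, e⟫) ^ 2 = ⟪u, e⟫ ^ 2 * c ^ 2 := by ring
        _ ≤ ⟪u, e⟫ ^ 2 := h2
    linarith

lemma sigmaMin_proj_le (V : Finset E) (u : E) :
    sigmaMin V * ‖(Submodule.orthogonalProjectionOnto (Submodule.span ℝ (V : Set E)) u : E)‖ ^ 2 ≤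
      ∑ w ∈ V, ⟪u, w⟫ ^ 2 := by
  classical
  set K := Submodule.span ℝ (V : Set E) with hK
  set p : E := (Submodule.orthogonalProjectionOnto K u : E) with hp
  have hsum : 0 ≤ ∑ w ∈ V, ⟪u, w⟫ ^ 2 := Finset.sum_nonneg fun _ _ => sq_nonneg _
  by_cases hp0 : p = 0
  · rw [hp0]; simpa using hsum
  obtain ⟨f, -, hf⟩ := Submodule.mem_span_finset.1 (Submodule.orthogonalProjectionOnto K u).2
  rw [← hp] at hf
  set A : ℝ := ∑ i ∈ V, f i ^ 2 with hA
  have hA0 : 0 < A := by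
    rcases lt_or_eq_of_le (Finset.sum_nonneg (fun i _ => sq_nonneg (f i)) : 0 ≤ A) with h | h
    · exact h
    · exfalso
      apply hp0
      rw [← hf]
      apply Finset.sum_eq_zero
      intro i hi
      have : f i ^ 2 = 0 := by
        have := (Finset.sum_eq_zero_iff_of_nonneg (fun i _ => sq_nonneg (f i))).1 h.symm i hi
        exact this
      rw [pow_eq_zero_iff (by norm_num) |>.1 this, zero_smul]
  have hup : ⟪u, p⟫ = ‖p‖ ^ 2 := by
    have : ⟪u - p, p⟫ = 0 := inner_residual_zero u (Submodule.orthogonalProjectionOnto K u).2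
    rw [inner_sub_left] at this
    rw [← real_inner_self_eq_norm_sq]
    linarith
  have hinner : ⟪u, p⟫ = ∑ i ∈ V, f i * ⟪u, i⟫ := by
    rw [← hf, inner_sum]
    exact Finset.sum_congr rfl fun i _ => by rw [real_inner_smul_right]
  have hCS : (‖p‖ ^ 2) ^ 2 ≤ A * ∑ w ∈ V, ⟪u, w⟫ ^ 2 := by
    rw [← hup, hinner]
    exact Finset.sum_mul_sq_le_sq_mul_sq V f fun i => ⟪u, i⟫
  -- σ ≤ ‖p‖² / A
  have hmem : ‖p‖ ^ 2 / A ∈ {r : ℝ | ∃ α : V → ℝ, ∑ v, (α v) ^ 2 = 1 ∧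
      r = ‖∑ v, α v • (v : E)‖ ^ 2} := by
    refine ⟨fun v => f v / Real.sqrt A, ?_, ?_⟩
    · rw [Finset.sum_coe_sort V (fun v => (f v / Real.sqrt A) ^ 2)]
      have : ∀ i ∈ V, (f i / Real.sqrt A) ^ 2 = f i ^ 2 / A := by
        intro i _
        rw [div_pow, Real.sq_sqrt hA0.le]
      rw [Finset.sum_congr rfl this, ← Finset.sum_div, div_self (ne_of_gt hA0)]
    · have hss : ∑ v : V, (f v / Real.sqrt A) • (v : E) = (Real.sqrt A)⁻¹ • p := by
        rw [← hf, Finset.smul_sum]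
        rw [Finset.sum_coe_sort V (fun v => (f v / Real.sqrt A) • (v : E))]
        exact Finset.sum_congr rfl fun i _ => by
          rw [smul_smul, div_eq_inv_mul, mul_comm]
      rw [hss, norm_smul, norm_inv, Real.norm_eq_abs,
        abs_of_pos (Real.sqrt_pos.2 hA0), mul_pow, ← Real.sqrt_inv, Real.sq_sqrt (by positivity)]
      rw [div_eq_inv_mul, mul_comm]
  have hbdd : BddBelow {r : ℝ | ∃ α : V → ℝ, ∑ v, (α v) ^ 2 = 1 ∧
      r = ‖∑ v, α v • (v : E)‖ ^ 2} := by
    refine ⟨0, fun r hr => ?_⟩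
    obtain ⟨α, -, rfl⟩ := hr
    positivity
  have hσ : sigmaMin V ≤ ‖p‖ ^ 2 / A := csInf_le hbdd hmem
  have hσA : sigmaMin V * A ≤ ‖p‖ ^ 2 := by
    calc sigmaMin V * A ≤ ‖p‖ ^ 2 / A * A := mul_le_mul_of_nonneg_right hσ hA0.le
      _ = ‖p‖ ^ 2 := by field_simp
  nlinarith [sq_nonneg (‖p‖ ^ 2), mul_le_mul_of_nonneg_right hσA (sq_nonneg ‖p‖)]

lemma sigmaMin_nonneg (V : Finset E) : 0 ≤ sigmaMin V := by
  unfold sigmaMin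
  rcases Set.eq_empty_or_nonempty {r : ℝ | ∃ α : V → ℝ, ∑ v, (α v) ^ 2 = 1 ∧
      r = ‖∑ v, α v • (v : E)‖ ^ 2} with h | h
  · rw [h, Real.sInf_empty]
  · apply le_csInf h
    rintro r ⟨α, -, rfl⟩
    positivity

lemma det_core {nA : ℕ} (A : Fin nA → E) (V W : Finset E)
    (hWle : fMat A W ≤ fMat A V) (hV1 : ∀ w ∈ V, ‖w‖ ≤ 1) :
    sigmaMin V * (fMat A V - fMat A W) ^ 2 ≤
      4 * fMat A V * ∑ w ∈ V, (fMat A (insert w W) - fMat A W) := by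
  classical
  set KW := Submodule.span ℝ (W : Set E) with hKW
  set KV := Submodule.span ℝ (V : Set E) with hKV
  set u' : Fin nA → E := fun j => A j - (Submodule.orthogonalProjectionOnto KW (A j) : E) with hu'
  set a : Fin nA → ℝ := fun j => ‖(Submodule.orthogonalProjectionOnto KV (A j) : E)‖ with ha
  set b : Fin nA → ℝ := fun j => ‖(Submodule.orthogonalProjectionOnto KW (A j) : E)‖ with hb
  set x : Fin nA → ℝ := fun j => ‖(Submodule.orthogonalProjectionOnto KV (u' j) : E)‖ with hx
  set D : ℝ := fMat A V - fMat A W with hD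
  have hD0 : 0 ≤ D := by simp [hD]; linarith
  -- Step 1: each column's gain dominates the squared residual inner products
  have step1 : ∀ w ∈ V, (∑ j, ⟪u' j, w⟫ ^ 2) ≤ fMat A (insert w W) - fMat A W := by
    intro w hw
    have : fMat A (insert w W) - fMat A W
        = ∑ j, (fVec (A j) (insert w W) - fVec (A j) W) := by
      unfold fMat; rw [Finset.sum_sub_distrib]
    rw [this]
    exact Finset.sum_le_sum fun j _ => fVec_insert_sub (A j) w (hV1 w hw) W
  -- Step 2: sigmaMin bound per column
  have step2 : ∀ j, sigmaMin V * x j ^ 2 ≤ ∑ w ∈ V, ⟪u' j, w⟫ ^ 2 :=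
    fun j => sigmaMin_proj_le V (u' j)
  -- Step 3: sum of squared projected residual norms
  have habx : ∀ j, a j ≤ x j + b j := by
    intro j
    have hdec : A j = u' j + (Submodule.orthogonalProjectionOnto KW (A j) : E) := by
      rw [hu', sub_add_cancel]
    have : (Submodule.orthogonalProjectionOnto KV (A j) : E) =
        (Submodule.orthogonalProjectionOnto KV (u' j) : E) +
        (Submodule.orthogonalProjectionOnto KV ((Submodule.orthogonalProjectionOnto KW (A j) : E)) : E) := by
      nth_rewrite 1 [hdec]
      rw [map_add]
      rfl
    rw [ha]
    calc ‖(Submodule.orthogonalProjectionOnto KV (A j) : E)‖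
        ≤ ‖(Submodule.orthogonalProjectionOnto KV (u' j) : E)‖ +
          ‖(Submodule.orthogonalProjectionOnto KV ((Submodule.orthogonalProjectionOnto KW (A j) : E)) : E)‖ := by
          rw [this]; exact norm_add_le _ _
      _ ≤ x j + b j := by
          apply add_le_add_right
          exact norm_proj_le _ _
  have hax : ∀ j, a j ^ 2 - b j ^ 2 ≤ x j * (a j + b j) := by
    intro j
    have h1 : a j - b j ≤ x j := by linarith [habx j]
    have h2 : (0 : ℝ) ≤ a j + b j := by positivity
    nlinarith
  have hDsum : D ≤ ∑ j, x j * (a j + b j) := by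
    have : D = ∑ j, (a j ^ 2 - b j ^ 2) := by
      rw [hD]; unfold fMat fVec
      rw [Finset.sum_sub_distrib]
    rw [this]
    exact Finset.sum_le_sum fun j _ => hax j
  have hCS : (∑ j, x j * (a j + b j)) ^ 2 ≤ (∑ j, x j ^ 2) * ∑ j, (a j + b j) ^ 2 :=
    Finset.sum_mul_sq_le_sq_mul_sq Finset.univ x (fun j => a j + b j)
  have hab4 : ∑ j, (a j + b j) ^ 2 ≤ 4 * fMat A V := by
    have h1 : ∑ j, (a j + b j) ^ 2 ≤ ∑ j, (2 * a j ^ 2 + 2 * b j ^ 2) :=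
      Finset.sum_le_sum fun j _ => by nlinarith [sq_nonneg (a j - b j)]
    have h2 : ∑ j, (2 * a j ^ 2 + 2 * b j ^ 2) = 2 * fMat A V + 2 * fMat A W := by
      rw [Finset.sum_add_distrib, ← Finset.mul_sum, ← Finset.mul_sum]
      rfl
    linarith
  have hD2 : D ^ 2 ≤ (∑ j, x j ^ 2) * (4 * fMat A V) := by
    have hs0 : 0 ≤ ∑ j, x j * (a j + b j) := Finset.sum_nonneg fun j _ => by positivity
    have : D ^ 2 ≤ (∑ j, x j * (a j + b j)) ^ 2 := by nlinarith
    have hx2 : 0 ≤ ∑ j, x j ^ 2 := Finset.sum_nonneg fun j _ => sq_nonneg _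
    nlinarith [mul_le_mul_of_nonneg_left hab4 hx2]
  -- combine
  have hfinal : sigmaMin V * D ^ 2 ≤ (4 * fMat A V) * ∑ w ∈ V, (fMat A (insert w W) - fMat A W) := by
    have hgain : sigmaMin V * ∑ j, x j ^ 2 ≤ ∑ w ∈ V, (fMat A (insert w W) - fMat A W) := by
      calc sigmaMin V * ∑ j, x j ^ 2 = ∑ j, sigmaMin V * x j ^ 2 := Finset.mul_sum _ _ _
        _ ≤ ∑ j, ∑ w ∈ V, ⟪u' j, w⟫ ^ 2 := Finset.sum_le_sum fun j _ => step2 j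
        _ = ∑ w ∈ V, ∑ j, ⟪u' j, w⟫ ^ 2 := Finset.sum_comm
        _ ≤ ∑ w ∈ V, (fMat A (insert w W) - fMat A W) :=
            Finset.sum_le_sum fun w hw => step1 w hw
    have hσ0 : 0 ≤ sigmaMin V := sigmaMin_nonneg V
    have hf0 : 0 ≤ fMat A V := Finset.sum_nonneg fun j _ => fVec_nonneg _ _
    nlinarith [mul_le_mul_of_nonneg_left hD2 hσ0]
  linarith

section Comb

variable {ι : Type*} [DecidableEq ι]

lemma swap_mem_iff {v w x : ι} {S' : Finset ι} (hv : v ∈ S') (hw : w ∈ S') :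
    Equiv.swap v w x ∈ S' ↔ x ∈ S' := by
  rcases eq_or_ne x v with rfl | hxv
  · simp [Equiv.swap_apply_left, hv, hw]
  rcases eq_or_ne x w with rfl | hxw
  · simp [Equiv.swap_apply_right, hv, hw]
  · rw [Equiv.swap_apply_of_ne_of_ne hxv hxw]

lemma swap_weight_sum {U' S' : Finset ι} (s : ℕ) {v w : ι}
    (hv : v ∈ S') (hw : w ∈ S') (hS'U : S' ⊆ U') :
    ∑ R ∈ U'.powersetCard s, (if v ∈ R then ((R ∩ S').card : ℝ)⁻¹ else 0)
    = ∑ R ∈ U'.powersetCard s, (if w ∈ R then ((R ∩ S').card : ℝ)⁻¹ else 0) := by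
  classical
  set σ := Equiv.swap v w with hσ
  have hvU := hS'U hv
  have hwU := hS'U hw
  have hsymm : σ.symm = σ := by rw [hσ, Equiv.symm_swap]
  have hemb : ∀ R : Finset ι, (R.map σ.toEmbedding).map σ.toEmbedding = R := by
    intro R
    rw [Finset.map_map]
    have : σ.toEmbedding.trans σ.toEmbedding = (Equiv.refl ι).toEmbedding := by
      ext x; simp [hσ]
    rw [this]
    simp
  have hmemU : ∀ R ∈ U'.powersetCard s, R.map σ.toEmbedding ∈ U'.powersetCard s := by
    intro R hR
    obtain ⟨hsub, hcard⟩ := Finset.mem_powersetCard.1 hR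
    refine Finset.mem_powersetCard.2 ⟨fun x hx => ?_, by rw [Finset.card_map]; exact hcard⟩
    rw [Finset.mem_map_equiv, hsymm] at hx
    exact (swap_mem_iff (x := x) hvU hwU).1 (hsub hx)
  have hinter : ∀ R : Finset ι, ((R.map σ.toEmbedding) ∩ S').card = (R ∩ S').card := by
    intro R
    have h : (R.map σ.toEmbedding) ∩ S' = (R ∩ S').map σ.toEmbedding := by
      ext x
      simp only [Finset.mem_inter, Finset.mem_map_equiv, hsymm]
      exact ⟨fun ⟨h1, h2⟩ => ⟨h1, (swap_mem_iff hv hw).2 h2⟩,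
        fun ⟨h1, h2⟩ => ⟨h1, (swap_mem_iff hv hw).1 h2⟩⟩
    rw [h, Finset.card_map]
  refine Finset.sum_nbij' (fun R => R.map σ.toEmbedding) (fun R => R.map σ.toEmbedding)
    hmemU hmemU (fun R _ => hemb R) (fun R _ => hemb R) ?_
  intro R hR
  have hcond : (w ∈ R.map σ.toEmbedding) = (v ∈ R) := by
    rw [eq_iff_iff, Finset.mem_map_equiv, hsymm, hσ, Equiv.swap_apply_right]
  simp only [hinter R, hcond]

end Comb

lemma choose_sub_le (n s d : ℕ) (hs : s ≤ n) (hd : d ≤ n) :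
    ((n - d).choose s : ℝ) ≤ (1 - (s : ℝ) / n) ^ d * (n.choose s) := by
  rcases Nat.eq_zero_or_pos n with rfl | hn
  · interval_cases s; interval_cases d; simp
  have hq0 : (0 : ℝ) ≤ 1 - (s : ℝ) / n := by
    rw [sub_nonneg, div_le_one (by positivity)]
    exact_mod_cast hs
  induction d with
  | zero => simp
  | succ d ih =>
    have hd' : d ≤ n := Nat.le_of_succ_le hd
    have ih' := ih hd'
    set M : ℕ := n - d with hM
    have hM1 : 1 ≤ M := by omega
    have hstep : ((n - (d + 1)).choose s : ℝ) ≤ (1 - (s : ℝ) / n) * ((n - d).choose s) := by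
      have hMd : n - (d + 1) = M - 1 := by omega
      rcases le_or_gt s (M - 1) with hsM | hsM
      · -- use the identity M * C(M-1, s) = C(M, s) * (M - s)
        have hid : M * (M - 1).choose s = M.choose s * (M - s) := by
          have h1 : Nat.succ (M - 1) * (M - 1).choose s = (M - 1 + 1).choose (s + 1) * (s + 1) :=
            Nat.add_one_mul_choose_eq (M - 1) s
          have h2 : (M - 1 + 1).choose (s + 1) * (s + 1) = (M - 1 + 1).choose s * (M - 1 + 1 - s) :=
            Nat.choose_succ_right_eq (M - 1 + 1) s
          have h3 : M - 1 + 1 = M := by omega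
          rw [h3] at h1 h2
          rw [show Nat.succ (M - 1) = M by omega] at h1
          rw [h1, h2]
        have hsM' : s ≤ M := le_trans hsM (Nat.sub_le M 1)
        have hcast : ((M - 1).choose s : ℝ) = (M.choose s : ℝ) * ((M : ℝ) - s) / M := by
          have : ((M : ℝ)) * ((M - 1).choose s : ℝ) = (M.choose s : ℝ) * ((M : ℝ) - s) := by
            have := congrArg (fun t : ℕ => (t : ℝ)) hid
            push_cast [Nat.cast_sub hsM'] at this
            convert this using 2 <;> push_cast <;> ring
          field_simp at this ⊢
          linarith
        rw [hMd, hcast]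
        have hfrac : ((M : ℝ) - s) / M ≤ 1 - (s : ℝ) / n := by
          rw [sub_div, div_self (by positivity : (M : ℝ) ≠ 0)]
          have : (s : ℝ) / n ≤ (s : ℝ) / M := by
            apply div_le_div_of_nonneg_left (by positivity) (by exact_mod_cast hM1)
            exact_mod_cast Nat.sub_le n d
          linarith
        calc (M.choose s : ℝ) * ((M : ℝ) - s) / M
            = ((M : ℝ) - s) / M * (M.choose s : ℝ) := by ring
          _ ≤ (1 - (s : ℝ) / n) * (M.choose s : ℝ) := by
              apply mul_le_mul_of_nonneg_right hfrac (Nat.cast_nonneg _)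
      · have : (n - (d + 1)).choose s = 0 := by
          apply Nat.choose_eq_zero_of_lt; omega
        rw [this]
        simpa using mul_nonneg hq0 (Nat.cast_nonneg ((n - d).choose s))
    calc ((n - (d + 1)).choose s : ℝ) ≤ (1 - (s : ℝ) / n) * ((n - d).choose s) := hstep
      _ ≤ (1 - (s : ℝ) / n) * ((1 - (s : ℝ) / n) ^ d * (n.choose s)) :=
          mul_le_mul_of_nonneg_left ih' hq0
      _ = (1 - (s : ℝ) / n) ^ (d + 1) * (n.choose s) := by ring

lemma geom_ratio (q : ℝ) (hq0 : 0 ≤ q) (hq1 : q ≤ 1) (d k : ℕ) (hd : 1 ≤ d) (hdk : d ≤ k) :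
    (k : ℝ) * (1 - q ^ d) ≥ (d : ℝ) * (1 - q ^ k) := by
  have hgeom : ∀ n : ℕ, (1 - q) * ∑ i ∈ Finset.range n, q ^ i = 1 - q ^ n := by
    intro n
    have := geom_sum_mul q n
    nlinarith [this]
  have hterm : ∀ i j : ℕ, i ≤ j → q ^ j ≤ q ^ i := fun i j h => pow_le_pow_of_le_one hq0 hq1 h
  have hsum1 : ∀ n : ℕ, (n : ℝ) * q ^ n ≤ ∑ i ∈ Finset.range n, q ^ i := by
    intro n
    calc (n : ℝ) * q ^ n = ∑ _i ∈ Finset.range n, q ^ n := by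
          rw [Finset.sum_const, Finset.card_range, nsmul_eq_mul]
      _ ≤ ∑ i ∈ Finset.range n, q ^ i :=
          Finset.sum_le_sum fun i hi => hterm i n (le_of_lt (Finset.mem_range.1 hi))
  -- k * Σ_{i<d} q^i ≥ d * Σ_{i<k} q^i
  have hkey : (d : ℝ) * ∑ i ∈ Finset.range k, q ^ i ≤ (k : ℝ) * ∑ i ∈ Finset.range d, q ^ i := by
    have hsplit : ∑ i ∈ Finset.range k, q ^ i
        = ∑ i ∈ Finset.range d, q ^ i + ∑ i ∈ Finset.Ico d k, q ^ i := by
      simp only [Finset.range_eq_Ico]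
      exact (Finset.sum_Ico_consecutive _ (Nat.zero_le d) hdk).symm
    have hico : ∑ i ∈ Finset.Ico d k, q ^ i ≤ ((k : ℝ) - d) * q ^ d := by
      calc ∑ i ∈ Finset.Ico d k, q ^ i ≤ ∑ _i ∈ Finset.Ico d k, q ^ d :=
            Finset.sum_le_sum fun i hi => hterm d i (Finset.mem_Ico.1 hi).1
        _ = ((k : ℝ) - d) * q ^ d := by
            rw [Finset.sum_const, Nat.card_Ico, nsmul_eq_mul]
            rw [Nat.cast_sub hdk]
    have hlo : (d : ℝ) * q ^ d ≤ ∑ i ∈ Finset.range d, q ^ i := hsum1 d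
    have hd0 : (0 : ℝ) ≤ d := Nat.cast_nonneg d
    have hkd : (0 : ℝ) ≤ (k : ℝ) - d := by
      rw [sub_nonneg]; exact_mod_cast hdk
    nlinarith [Finset.sum_nonneg (fun i (_ : i ∈ Finset.range d) => pow_nonneg hq0 i)]
  have h1 : (1 : ℝ) - q ^ d = (1 - q) * ∑ i ∈ Finset.range d, q ^ i := (hgeom d).symm
  have h2 : (1 : ℝ) - q ^ k = (1 - q) * ∑ i ∈ Finset.range k, q ^ i := (hgeom k).symm
  rw [ge_iff_le, h1, h2]
  have h1q : (0 : ℝ) ≤ 1 - q := by linarith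
  nlinarith [mul_le_mul_of_nonneg_left hkey h1q]

lemma fMat_mono {nA : ℕ} (A : Fin nA → E) {V W : Finset E}
    (h : Submodule.span ℝ (V : Set E) ≤ Submodule.span ℝ (W : Set E)) :
    fMat A V ≤ fMat A W :=
  Finset.sum_le_sum fun j _ => fVec_mono h (A j)

lemma sum_image_le' {α β : Type*} [DecidableEq β] (s : Finset α) (f : α → β) (F : β → ℝ)
    (h0 : ∀ b, 0 ≤ F b) : ∑ b ∈ s.image f, F b ≤ ∑ a ∈ s, F (f a) := by
  classical
  induction s using Finset.induction_on with
  | empty => simp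
  | insert _ _ ha ih =>
    rename_i a s
    rw [Finset.image_insert, Finset.sum_insert ha]
    by_cases h : f a ∈ s.image f
    · rw [Finset.insert_eq_self.2 h]
      linarith [h0 (f a)]
    · rw [Finset.sum_insert h]
      linarith

lemma sampled_sup_bound {ι : Type*} [DecidableEq ι] (U' S' : Finset ι) (hS'U : S' ⊆ U')
    (g : ι → ℝ) (hg0 : ∀ v, 0 ≤ g v) (s : ℕ) (hs0 : 0 < s) (hsU' : s ≤ U'.card)
    (hS'ne : S'.Nonempty) :
    (1 - (1 - (s : ℝ) / U'.card) ^ S'.card) / (S'.card : ℝ)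
        * ((U'.powersetCard s).card : ℝ) * (∑ v ∈ S', g v)
      ≤ ∑ R ∈ U'.powersetCard s, sSup (g '' (R : Set ι)) := by
  classical
  obtain ⟨v₀, hv₀⟩ := hS'ne
  set P := U'.powersetCard s with hP
  set n' := U'.card with hn'
  set d := S'.card with hd
  set q : ℝ := 1 - (s : ℝ) / n' with hq
  set G := ∑ v ∈ S', g v with hG
  have hd1 : 1 ≤ d := Finset.card_pos.2 ⟨v₀, hv₀⟩
  have hdn' : d ≤ n' := Finset.card_le_card hS'U
  have hn'0 : 0 < n' := lt_of_lt_of_le hs0 hsU'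
  have hq1 : q ≤ 1 := by
    rw [hq]
    have : (0:ℝ) ≤ (s:ℝ)/n' := by positivity
    linarith
  have hq0 : 0 ≤ q := by
    rw [hq, sub_nonneg, div_le_one (by exact_mod_cast hn'0)]
    exact_mod_cast hsU'
  have hG0 : 0 ≤ G := Finset.sum_nonneg fun v _ => hg0 v
  have hbddR : ∀ R : Finset ι, BddAbove (g '' (R : Set ι)) := fun R =>
    (R.finite_toSet.image g).bddAbove
  have hsup_mem : ∀ (R : Finset ι), ∀ v ∈ R, g v ≤ sSup (g '' (R : Set ι)) :=
    fun R v hv => le_csSup (hbddR R) ⟨v, hv, rfl⟩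
  have hsup0 : ∀ R ∈ P, 0 ≤ sSup (g '' (R : Set ι)) := by
    intro R hR
    obtain ⟨hsub, hcard⟩ := Finset.mem_powersetCard.1 hR
    obtain ⟨v, hv⟩ := Finset.card_pos.1 (hcard ▸ hs0)
    exact le_trans (hg0 v) (hsup_mem R v hv)
  set c : Finset ι → ℝ := fun R => ((R ∩ S').card : ℝ) with hc
  set Wt : ι → ℝ := fun v => ∑ R ∈ P, (if v ∈ R then (c R)⁻¹ else 0) with hWt
  have hWconst : ∀ v ∈ S', Wt v = Wt v₀ := by
    intro v hv
    simpa [hWt, hc, hP] using swap_weight_sum (U' := U') (S' := S') s hv hv₀ hS'U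
  set N1 : ℝ := ∑ R ∈ P, (if (R ∩ S').Nonempty then (1:ℝ) else 0) with hN1
  have hrowsum : ∀ R ∈ P, (∑ v ∈ S', if v ∈ R then (c R)⁻¹ else 0)
      = (if (R ∩ S').Nonempty then (1:ℝ) else 0) := by
    intro R _
    rw [Finset.sum_ite_mem]
    rcases Finset.eq_empty_or_nonempty (R ∩ S') with he | hne
    · have h1 : S' ∩ R = ∅ := by rw [Finset.inter_comm]; exact he
      rw [h1, if_neg (by rw [he]; exact Finset.not_nonempty_empty)]
      simp
    · have hcpos : 0 < (R ∩ S').card := Finset.card_pos.2 hne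
      rw [if_pos hne, Finset.inter_comm S' R, Finset.sum_const, nsmul_eq_mul, hc]
      have : ((R ∩ S').card : ℝ) ≠ 0 := by positivity
      field_simp
  have hsumWt : ∑ v ∈ S', Wt v = N1 := by
    calc ∑ v ∈ S', Wt v = ∑ R ∈ P, ∑ v ∈ S', (if v ∈ R then (c R)⁻¹ else 0) := Finset.sum_comm
      _ = N1 := Finset.sum_congr rfl hrowsum
  have hWt0 : Wt v₀ * d = N1 := by
    calc Wt v₀ * d = ∑ _v ∈ S', Wt v₀ := by rw [Finset.sum_const, nsmul_eq_mul]; ring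
      _ = ∑ v ∈ S', Wt v := Finset.sum_congr rfl fun v hv => (hWconst v hv).symm
      _ = N1 := hsumWt
  have hper : ∀ R ∈ P, (∑ v ∈ R ∩ S', g v) * (c R)⁻¹ ≤ sSup (g '' (R : Set ι)) := by
    intro R hR
    rcases Finset.eq_empty_or_nonempty (R ∩ S') with he | hne
    · rw [he]
      simpa using hsup0 R hR
    · have hcpos : 0 < (R ∩ S').card := Finset.card_pos.2 hne
      have hcr : (0:ℝ) < ((R ∩ S').card : ℝ) := by exact_mod_cast hcpos
      have hsum_le : ∑ v ∈ R ∩ S', g v ≤ (R ∩ S').card • sSup (g '' (R : Set ι)) :=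
        Finset.sum_le_card_nsmul _ _ _ (fun v hv => hsup_mem R v (Finset.mem_inter.1 hv).1)
      rw [nsmul_eq_mul] at hsum_le
      rw [hc]
      calc (∑ v ∈ R ∩ S', g v) * ((R ∩ S').card : ℝ)⁻¹
          ≤ (((R ∩ S').card : ℝ) * sSup (g '' (R : Set ι))) * ((R ∩ S').card : ℝ)⁻¹ :=
            mul_le_mul_of_nonneg_right hsum_le (by positivity)
        _ = sSup (g '' (R : Set ι)) := by field_simp
  have hTotal : ∑ v ∈ S', g v * Wt v ≤ ∑ R ∈ P, sSup (g '' (R : Set ι)) := by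
    have hswap : ∑ v ∈ S', g v * Wt v = ∑ R ∈ P, (∑ v ∈ R ∩ S', g v) * (c R)⁻¹ := by
      calc ∑ v ∈ S', g v * Wt v
          = ∑ v ∈ S', ∑ R ∈ P, (if v ∈ R then g v * (c R)⁻¹ else 0) := by
            apply Finset.sum_congr rfl; intro v _
            rw [hWt, Finset.mul_sum]
            apply Finset.sum_congr rfl; intro R _
            rw [mul_ite, mul_zero]
        _ = ∑ R ∈ P, ∑ v ∈ S', (if v ∈ R then g v * (c R)⁻¹ else 0) := Finset.sum_comm
        _ = ∑ R ∈ P, (∑ v ∈ R ∩ S', g v) * (c R)⁻¹ := by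
            apply Finset.sum_congr rfl; intro R _
            rw [Finset.sum_ite_mem, Finset.inter_comm, ← Finset.sum_mul]
    rw [hswap]
    exact Finset.sum_le_sum hper
  have hGW : G * Wt v₀ ≤ ∑ R ∈ P, sSup (g '' (R : Set ι)) := by
    rw [hG, Finset.sum_mul]
    calc ∑ v ∈ S', g v * Wt v₀ = ∑ v ∈ S', g v * Wt v :=
          Finset.sum_congr rfl fun v hv => by rw [hWconst v hv]
      _ ≤ _ := hTotal
  -- counting : N1 ≥ (1 - q ^ d) * P.card
  have hN1count : N1 = ((P.filter (fun R => (R ∩ S').Nonempty)).card : ℝ) := by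
    rw [hN1, Finset.sum_boole]
  have hsplit : (P.filter (fun R => (R ∩ S').Nonempty)).card
      + (P.filter (fun R => ¬ (R ∩ S').Nonempty)).card = P.card :=
    Finset.card_filter_add_card_filter_not _
  have hN0 : P.filter (fun R => ¬ (R ∩ S').Nonempty) = (U' \ S').powersetCard s := by
    ext R
    simp only [Finset.mem_filter, Finset.mem_powersetCard, Finset.not_nonempty_iff_eq_empty, hP]
    constructor
    · rintro ⟨⟨hsub, hcard⟩, hemp⟩
      exact ⟨Finset.subset_sdiff.2 ⟨hsub, Finset.disjoint_iff_inter_eq_empty.2 hemp⟩, hcard⟩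
    · rintro ⟨hsub, hcard⟩
      have h1 := Finset.subset_sdiff.1 hsub
      exact ⟨⟨h1.1, hcard⟩, Finset.disjoint_iff_inter_eq_empty.1 h1.2⟩
  have hN0le : (((U' \ S').powersetCard s).card : ℝ) ≤ q ^ d * (P.card : ℝ) := by
    rw [Finset.card_powersetCard, hP, Finset.card_powersetCard, Finset.card_sdiff_of_subset hS'U]
    exact choose_sub_le n' s d hsU' hdn'
  have hN1ge : (1 - q ^ d) * (P.card : ℝ) ≤ N1 := by
    have hNsplit : N1 = (P.card : ℝ) - (((U' \ S').powersetCard s).card : ℝ) := by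
      rw [hN1count, ← hN0]
      have := hsplit
      push_cast [← this]
      ring
    rw [hNsplit]
    linarith
  -- conclusion
  have hdR : (0:ℝ) < d := by exact_mod_cast hd1
  have hWtv : (1 - q ^ d) * (P.card : ℝ) / d ≤ Wt v₀ := by
    rw [div_le_iff₀ hdR, ← hWt0] at *
    linarith [hN1ge]
  have hqd1 : 0 ≤ 1 - q ^ d ∨ 1 - q ^ d < 0 := le_or_gt 0 (1 - q ^ d)
  calc (1 - q ^ d) / (d : ℝ) * (P.card : ℝ) * G
      = ((1 - q ^ d) * (P.card : ℝ) / d) * G := by ring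
    _ ≤ Wt v₀ * G := by
        apply mul_le_mul_of_nonneg_right hWtv hG0
    _ = G * Wt v₀ := by ring
    _ ≤ _ := hGW

set_option maxHeartbeats 2000000 in
/-- Expected marginal gain of the lazier-than-lazy greedy sampling step.
S and T are sets of columns of B given by index sets; R ranges uniformly over
all size-s subsets of the columns outside T, and the expectation is the average
over these subsets of the best marginal gain within R. -/
theorem lazier_expected_marginal_gain {m nA nB : ℕ}
    (A : Fin nA → EuclideanSpace ℝ (Fin m)) (B : Fin nB → EuclideanSpace ℝ (Fin m))
    (hB : ∀ j, ‖B j‖ = 1) (k : ℕ) (hk : 1 ≤ k)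
    (S T : Finset (Fin nB)) (hSk : S.card ≤ k)
    (hσ : 0 < sigmaMin (S.image B))
    (hST : fMat A (T.image B) ≤ fMat A (S.image B))
    (hS0 : 0 < fMat A (S.image B))
    (δ : ℝ) (hδ0 : 0 < δ) (hδ1 : δ < 1)
    (s : ℕ) (hs1 : (nB : ℝ) * Real.log (1 / δ) / k ≤ s) (hs2 : s ≤ nB - T.card) :
    (1 - δ) * sigmaMin (S.image B) *
        (fMat A (S.image B) - fMat A (T.image B)) ^ 2 /
        (4 * k * fMat A (S.image B)) ≤
      (∑ R ∈ (Finset.univ \ T).powersetCard s,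
          sSup ((fun v => fMat A (insert (B v) (T.image B)) - fMat A (T.image B)) ''
            (R : Set (Fin nB)))) /
        (((Finset.univ \ T).powersetCard s).card : ℝ) := by
  -- abbreviations
  set TB := T.image B with hTB
  set VB := S.image B with hVB
  set g : Fin nB → ℝ := fun v => fMat A (insert (B v) TB) - fMat A TB with hg
  set U' : Finset (Fin nB) := Finset.univ \ T with hU'
  set P := U'.powersetCard s with hP
  set S' := S \ T with hS'def
  set D := fMat A VB - fMat A TB with hD
  set σm := sigmaMin VB with hσm
  set fS := fMat A VB with hfS
  -- basic positivity facts
  have hnB0 : 0 < nB := by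
    rcases Nat.eq_zero_or_pos nB with h0 | h; swap; · exact h
    exfalso
    subst h0
    have hSe : S = ∅ := Finset.eq_empty_of_isEmpty S
    have h0 : σm = 0 := by
      rw [hσm, hVB, hSe, Finset.image_empty]
      unfold sigmaMin
      convert Real.sInf_empty using 2
      rw [Set.eq_empty_iff_forall_notMem]
      rintro r ⟨α, hα, -⟩
      simp at hα
    rw [h0] at hσ
    exact lt_irrefl 0 hσ
  have hlog : 0 < Real.log (1 / δ) := Real.log_pos (one_lt_one_div hδ0 hδ1)
  have hk0 : (0 : ℝ) < k := by exact_mod_cast hk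
  have hs0 : 0 < s := by
    by_contra h
    push_neg at h
    interval_cases s
    have : (0 : ℝ) < (nB : ℝ) * Real.log (1 / δ) / k := by positivity
    push_cast at hs1
    linarith
  have hcardU' : U'.card = nB - T.card := by
    rw [hU', Finset.card_sdiff_of_subset (Finset.subset_univ T), Finset.card_univ, Fintype.card_fin]
  have hsU' : s ≤ U'.card := by rw [hcardU']; exact hs2
  have hNpos : 0 < P.card := by
    rw [hP, Finset.card_powersetCard]
    exact Nat.choose_pos hsU'
  have hg0 : ∀ v, 0 ≤ g v := by
    intro v
    rw [hg]
    have : fMat A TB ≤ fMat A (insert (B v) TB) := by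
      apply fMat_mono
      apply Submodule.span_mono
      rw [Finset.coe_insert]
      exact Set.subset_insert _ _
    simp only [sub_nonneg]
    exact this
  have hD0 : 0 ≤ D := by rw [hD]; linarith
  -- every sampled set is nonempty, so the sup of gains is nonnegative
  have hbddR : ∀ R : Finset (Fin nB), BddAbove (g '' (R : Set (Fin nB))) := fun R =>
    (R.finite_toSet.image g).bddAbove
  have hsup_mem : ∀ (R : Finset (Fin nB)), ∀ v ∈ R, g v ≤ sSup (g '' (R : Set (Fin nB))) :=
    fun R v hv => le_csSup (hbddR R) ⟨v, hv, rfl⟩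
  have hsup0 : ∀ R ∈ P, 0 ≤ sSup (g '' (R : Set (Fin nB))) := by
    intro R hR
    obtain ⟨hsub, hcard⟩ := Finset.mem_powersetCard.1 hR
    obtain ⟨v, hv⟩ := Finset.card_pos.1 (hcard ▸ hs0)
    exact le_trans (hg0 v) (hsup_mem R v hv)
  have hTot0 : 0 ≤ ∑ R ∈ P, sSup (g '' (R : Set (Fin nB))) := Finset.sum_nonneg hsup0
  -- gains are nonnegative for arbitrary vectors
  have hgain0 : ∀ w : EuclideanSpace ℝ (Fin m), 0 ≤ fMat A (insert w TB) - fMat A TB := by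
    intro w
    have : fMat A TB ≤ fMat A (insert w TB) := by
      apply fMat_mono
      apply Submodule.span_mono
      rw [Finset.coe_insert]
      exact Set.subset_insert _ _
    linarith
  rcases Finset.eq_empty_or_nonempty S' with hS'e | hS'ne
  · -- degenerate case : S ⊆ T, hence D = 0
    have hSsubT : S ⊆ T := by
      rw [← Finset.sdiff_eq_empty_iff_subset]
      rw [hS'def] at hS'e
      exact hS'e
    have hfST : fS ≤ fMat A TB := by
      rw [hfS, hVB, hTB]
      exact fMat_mono A (Submodule.span_mono
        (Finset.coe_subset.2 (Finset.image_subset_image hSsubT)))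
    have hDz : D = 0 := le_antisymm (by rw [hD]; rw [hfS] at hfST; linarith) hD0
    rw [hDz]
    have hnum : (1 - δ) * σm * (0:ℝ) ^ 2 / (4 * k * fS) = 0 := by ring
    rw [hnum]
    exact div_nonneg hTot0 (Nat.cast_nonneg _)
  -- main case
  obtain ⟨v₀, hv₀⟩ := hS'ne
  have hS'U : S' ⊆ U' := by
    intro x hx
    rw [hS'def, Finset.mem_sdiff] at hx
    rw [hU', Finset.mem_sdiff]
    exact ⟨Finset.mem_univ x, hx.2⟩
  set d := S'.card with hd
  have hd1 : 1 ≤ d := Finset.card_pos.2 ⟨v₀, hv₀⟩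
  have hdk : d ≤ k := le_trans (Finset.card_le_card (by rw [hS'def]; exact Finset.sdiff_subset)) hSk
  set n' := U'.card with hn'
  have hdn' : d ≤ n' := Finset.card_le_card hS'U
  have hn'0 : 0 < n' := lt_of_lt_of_le hs0 hsU'
  set q : ℝ := 1 - (s:ℝ)/n' with hq
  have hq1 : q ≤ 1 := by
    rw [hq]
    have : (0:ℝ) ≤ (s:ℝ)/n' := by positivity
    linarith
  have hq0 : 0 ≤ q := by
    rw [hq, sub_nonneg, div_le_one (by exact_mod_cast hn'0)]
    exact_mod_cast hsU'
  -- deterministic part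
  have hnorm1 : ∀ w ∈ VB, ‖w‖ ≤ 1 := by
    intro w hw
    rw [hVB] at hw
    obtain ⟨j, -, rfl⟩ := Finset.mem_image.1 hw
    rw [hB j]
  have hdet : σm * D ^ 2 ≤ 4 * fS * ∑ w ∈ VB, (fMat A (insert w TB) - fMat A TB) :=
    det_core A VB TB hST hnorm1
  have himg : ∑ w ∈ VB, (fMat A (insert w TB) - fMat A TB) ≤ ∑ v ∈ S, g v := by
    rw [hVB]
    exact sum_image_le' S B (fun w => fMat A (insert w TB) - fMat A TB) hgain0
  set G := ∑ v ∈ S', g v with hG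
  have hG0 : 0 ≤ G := Finset.sum_nonneg fun v _ => hg0 v
  have hGS : ∑ v ∈ S, g v = G := by
    rw [hG]
    apply (Finset.sum_subset (by rw [hS'def]; exact Finset.sdiff_subset) ?_).symm
    intro x hxS hxS'
    have hxT : x ∈ T := by
      by_contra hxT
      exact hxS' (by rw [hS'def, Finset.mem_sdiff]; exact ⟨hxS, hxT⟩)
    have : (B x) ∈ TB := by rw [hTB]; exact Finset.mem_image_of_mem B hxT
    rw [hg]
    simp only [Finset.insert_eq_self.2 this, sub_self]
  have hfS0 : (0:ℝ) < fS := hS0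
  have hdetG : σm * D ^ 2 ≤ 4 * fS * G := by
    have h1 : ∑ w ∈ VB, (fMat A (insert w TB) - fMat A TB) ≤ G := le_of_le_of_eq himg hGS
    have h2 : (0:ℝ) ≤ 4 * fS := by linarith
    calc σm * D ^ 2 ≤ 4 * fS * ∑ w ∈ VB, (fMat A (insert w TB) - fMat A TB) := hdet
      _ ≤ 4 * fS * G := mul_le_mul_of_nonneg_left h1 h2
  -- probability part
  have hgeom := geom_ratio q hq0 hq1 d k hd1 hdk
  have hqk : q ^ k ≤ δ := by
    have h1 : q ≤ Real.exp (-((s:ℝ)/n')) := by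
      rw [hq]
      have := Real.add_one_le_exp (-((s:ℝ)/n'))
      linarith
    have h2 : q ^ k ≤ Real.exp (-((s:ℝ)/n')) ^ k := pow_le_pow_left₀ hq0 h1 k
    have h3 : Real.exp (-((s:ℝ)/n')) ^ k = Real.exp (-((s:ℝ) * k / n')) := by
      rw [← Real.exp_nat_mul]
      congr 1
      ring
    have h4 : -((s:ℝ) * k / n') ≤ Real.log δ := by
      have hlogd : Real.log (1/δ) = - Real.log δ := by rw [one_div, Real.log_inv]
      have hkl : (nB:ℝ) * Real.log (1/δ) ≤ (s:ℝ) * k := by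
        rw [div_le_iff₀ hk0] at hs1
        linarith
      have hn'nB : (n' : ℝ) ≤ nB := by
        have : n' ≤ nB := by omega
        exact_mod_cast this
      have h5 : (n':ℝ) * Real.log (1/δ) ≤ (s:ℝ) * k := by nlinarith
      have h6 : Real.log (1/δ) ≤ (s:ℝ) * k / n' := by
        rw [le_div_iff₀ (by exact_mod_cast hn'0)]
        linarith [h5]
      rw [hlogd] at h6
      linarith
    calc q ^ k ≤ Real.exp (-((s:ℝ) * k / n')) := h3 ▸ h2
      _ ≤ Real.exp (Real.log δ) := Real.exp_le_exp.2 h4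
      _ = δ := Real.exp_log hδ0
  -- sampled sup bound
  have hsamp := sampled_sup_bound U' S' hS'U g hg0 s hs0 hsU' ⟨v₀, hv₀⟩
  rw [← hn', ← hd, ← hq, ← hP, ← hG] at hsamp
  -- final arithmetic
  have hPN : (0:ℝ) < (P.card : ℝ) := by exact_mod_cast hNpos
  have hdR : (0:ℝ) < (d:ℝ) := by exact_mod_cast hd1
  have hkR : (0:ℝ) < (k:ℝ) := hk0
  rw [div_le_div_iff₀ (mul_pos (mul_pos (by norm_num : (0:ℝ) < 4) hkR) hfS0) hPN]
  -- (1-δ) * σm * D^2 * P.card ≤ Total * (4 * k * fS)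
  have hβ : (1 - δ) * d ≤ (k:ℝ) * (1 - q ^ d) := by
    have hδq : 1 - δ ≤ 1 - q ^ k := by linarith
    have := mul_le_mul_of_nonneg_left hδq (le_of_lt hdR)
    linarith [hgeom]
  have hTot := hsamp
  -- goal chain
  have hGnn : 0 ≤ (1 - q ^ d) := by
    have : q ^ d ≤ 1 := pow_le_one₀ hq0 hq1
    linarith
  have key : (1 - δ) * σm * D ^ 2 * (P.card:ℝ) * d
      ≤ (∑ R ∈ P, sSup (g '' (R : Set (Fin nB)))) * (4 * (k:ℝ) * fS) * d := by
    have c1 : (1 - δ) * σm * D ^ 2 * (P.card:ℝ) * d ≤ (1 - δ) * d * (4 * fS * G) * (P.card:ℝ) := by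
      have h := mul_le_mul_of_nonneg_right hdetG
        (mul_nonneg (mul_nonneg (by linarith : (0:ℝ) ≤ 1 - δ) hPN.le) hdR.le)
      calc (1 - δ) * σm * D ^ 2 * (P.card:ℝ) * d
          = σm * D ^ 2 * ((1 - δ) * (P.card:ℝ) * d) := by ring
        _ ≤ 4 * fS * G * ((1 - δ) * (P.card:ℝ) * d) := h
        _ = (1 - δ) * d * (4 * fS * G) * (P.card:ℝ) := by ring
    have c2 : (1 - δ) * d * (4 * fS * G) * (P.card:ℝ)
        ≤ (k:ℝ) * (1 - q ^ d) * (4 * fS * G) * (P.card:ℝ) := by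
      apply mul_le_mul_of_nonneg_right _ hPN.le
      apply mul_le_mul_of_nonneg_right hβ
      exact mul_nonneg (by linarith : (0:ℝ) ≤ 4 * fS) hG0
    have c3 : (k:ℝ) * (1 - q ^ d) * (4 * fS * G) * (P.card:ℝ)
        = ((1 - q ^ d) / d * (P.card:ℝ) * G) * (4 * (k:ℝ) * fS) * d := by
      field_simp
    have c4 : ((1 - q ^ d) / d * (P.card:ℝ) * G) * (4 * (k:ℝ) * fS) * d
        ≤ (∑ R ∈ P, sSup (g '' (R : Set (Fin nB)))) * (4 * (k:ℝ) * fS) * d := by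
      apply mul_le_mul_of_nonneg_right _ hdR.le
      apply mul_le_mul_of_nonneg_right hTot
      exact mul_nonneg (mul_nonneg (by norm_num : (0:ℝ) ≤ 4) hkR.le) hfS0.le
    linarith
  have := le_of_mul_le_mul_right (by linarith [key] :
      (1 - δ) * σm * D ^ 2 * (P.card:ℝ) * d
        ≤ (∑ R ∈ P, sSup (g '' (R : Set (Fin nB)))) * (4 * (k:ℝ) * fS) * d) hdR
  linarith [this]
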